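/- The count N(d;2,0,0) of 2×2×2 non-negative integer arrays of total sum d and weight (2,0,0) satisfies: if d ≡ 0 (mod 4) then 384 · N(d;2,0,0) = d(d+4)²(d+8); if d ≡ 2 (mod 4) then 384 · N(d;2,0,0) = (d+2)(d+6)(d²+8d+4); and if d is odd then N(d;2,0,0) = 0. -/

import Mathlib

open Finset

/-- `N d a b c` is the number of 2×2×2 arrays of non-negative integers with total
sum `d` whose slice sums in the three directions differ by `a`, `b`, `c`
respectively; it is the dimension of the weight space `W(d;a,b,c)`. -/
noncomputable def N (d a b c : ℕ) : ℕ :=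
  Set.ncard {e : Fin 2 × Fin 2 × Fin 2 → ℕ |
    (∑ i : Fin 2, ∑ j : Fin 2, ∑ k : Fin 2, e (i, j, k)) = d ∧
    (∑ j : Fin 2, ∑ k : Fin 2, e (0, j, k)) = (∑ j : Fin 2, ∑ k : Fin 2, e (1, j, k)) + a ∧
    (∑ i : Fin 2, ∑ k : Fin 2, e (i, 0, k)) = (∑ i : Fin 2, ∑ k : Fin 2, e (i, 1, k)) + b ∧
    (∑ i : Fin 2, ∑ j : Fin 2, e (i, j, 0)) = (∑ i : Fin 2, ∑ j : Fin 2, e (i, j, 1)) + c}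

def Pc (c x : ℕ) : ℕ :=
  ((range (c+1) ×ˢ range (c+1)).filter (fun qr => qr.1 + qr.2 = x)).card

lemma Pc_eq (c x : ℕ) : Pc c x = min x c + 1 - (x - c) := by
  rw [Pc, ← Nat.card_Icc (x - c) (min x c)]
  apply Finset.card_bij (fun qr _ => qr.1)
  · intro a ha
    simp only [mem_filter, mem_product, mem_range, mem_Icc] at ha ⊢
    omega
  · intro a ha b hb h
    simp only [mem_filter, mem_product, mem_range] at ha hb
    ext
    · exact h
    · omega
  · intro i hi
    simp only [mem_Icc] at hi
    exact ⟨(i, x - i), by simp only [mem_filter, mem_product, mem_range]; omega, rfl⟩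

def Fb (u v : ℕ) : ℕ :=
  ((range (u+1) ×ˢ range (u+1) ×ˢ range (v+1) ×ˢ range (v+1)).filter
    (fun x => x.1 + x.2.1 + x.2.2.1 + x.2.2.2 = u + v + 1)).card

lemma Fb_rep (u v : ℕ) (huv : u ≤ v + 1) :
    Fb u v = ∑ a ∈ range (u+1) ×ˢ range (u+1), Pc v (u + v + 1 - (a.1 + a.2)) := by
  rw [Fb]
  rw [Finset.card_eq_sum_card_fiberwise (f := fun x => (x.1, x.2.1))
    (t := range (u+1) ×ˢ range (u+1))]
  · refine Finset.sum_congr rfl fun a ha => ?_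
    simp only [mem_product, mem_range] at ha
    rw [Pc]
    apply Finset.card_bij (fun x _ => (x.2.2.1, x.2.2.2))
    · intro x hx
      simp only [mem_filter, mem_product, mem_range, Prod.ext_iff] at hx ⊢
      omega
    · intro x hx y hy h
      simp only [mem_filter, mem_product, mem_range, Prod.ext_iff] at hx hy h ⊢
      omega
    · intro qr hqr
      simp only [mem_filter, mem_product, mem_range] at hqr
      have hsum : a.1 + a.2 + (qr.1 + qr.2) = u + v + 1 := by omega
      exact ⟨(a.1, a.2, qr.1, qr.2), by
        simp only [mem_filter, mem_product, mem_range, Prod.ext_iff, and_true]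
        omega, rfl⟩
  · intro x hx
    simp only [mem_coe, mem_filter, mem_product, mem_range] at hx ⊢
    omega

lemma sq_sum (c : ℕ) (h : ℕ → ℕ) :
    ∑ a ∈ range (c+1) ×ˢ range (c+1), h (a.1 + a.2)
      = ∑ t ∈ range (2*c+1), Pc c t * h t := by
  have key := Finset.sum_fiberwise_of_maps_to (s := range (c+1) ×ˢ range (c+1))
      (t := range (2*c+1)) (g := fun a : ℕ × ℕ => a.1 + a.2)
      (fun x hx => by simp only [mem_product, mem_range] at hx ⊢; omega)
      (fun a => h (a.1 + a.2))
  rw [← key]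
  refine Finset.sum_congr rfl fun t _ => ?_
  have hc : ∀ x ∈ (range (c+1) ×ˢ range (c+1)).filter (fun a : ℕ × ℕ => a.1 + a.2 = t),
      h (x.1 + x.2) = h t := fun x hx => by
    simp only [mem_filter] at hx
    rw [hx.2]
  rw [Finset.sum_congr rfl hc, Finset.sum_const, smul_eq_mul, Pc]

lemma Tsum (n : ℕ) : 3 * ∑ t ∈ range (n+1), t*(t+1) = n*(n+1)*(n+2) := by
  induction n with
  | zero => simp
  | succ n ih => rw [Finset.sum_range_succ, Nat.mul_add, ih]; ring

lemma Fb_step (u v : ℕ) (h : u ≤ v) : Fb u (v+1) = Fb u v + (u+1)^2 := by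
  rw [Fb_rep u v (by omega), Fb_rep u (v+1) (by omega)]
  have : ∀ a ∈ range (u+1) ×ˢ range (u+1),
      Pc (v+1) (u + (v+1) + 1 - (a.1 + a.2))
        = Pc v (u + v + 1 - (a.1 + a.2)) + 1 := by
    intro a ha
    simp only [mem_product, mem_range] at ha
    rw [Pc_eq, Pc_eq]
    omega
  rw [Finset.sum_congr rfl this, Finset.sum_add_distrib, Finset.sum_const,
    Finset.card_product, Finset.card_range, smul_eq_mul, mul_one, sq]

lemma Fb_diag (u : ℕ) : 3 * Fb u u = 2*u*(u+1)*(u+2) := by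
  rw [Fb_rep u u (by omega)]
  have hs := sq_sum u (fun t => Pc u (u + u + 1 - t))
  try simp only [] at hs
  rw [hs]
  have hsplit : 2*u + 1 = (u+1) + u := by omega
  rw [hsplit, Finset.sum_range_add]
  have e1 : ∀ t ∈ range (u+1), Pc u t * (fun t => Pc u (u + u + 1 - t)) t = t*(t+1) := by
    intro t ht
    simp only [mem_range] at ht
    have a1 : Pc u t = t + 1 := by rw [Pc_eq]; omega
    have a2 : Pc u (u + u + 1 - t) = t := by rw [Pc_eq]; omega
    simp only [a1, a2]; ring
  have e2 : ∀ i ∈ range u, Pc u (u+1+i) * (fun t => Pc u (u + u + 1 - t)) (u+1+i)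
      = (u-i) * (u-i+1) := by
    intro i hi
    simp only [mem_range] at hi
    have a1 : Pc u (u+1+i) = u - i := by rw [Pc_eq]; omega
    have a2 : Pc u (u + u + 1 - (u+1+i)) = u - i + 1 := by rw [Pc_eq]; omega
    simp only [a1, a2]
  rw [Finset.sum_congr rfl e1, Finset.sum_congr rfl e2]
  have e3 : ∑ i ∈ range u, (u-i) * (u-i+1) = ∑ i ∈ range u, (i+1) * (i+1+1) := by
    rw [← Finset.sum_range_reflect]
    refine Finset.sum_congr rfl fun i hi => ?_
    simp only [mem_range] at hi
    congr 1 <;> omega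
  rw [e3]
  have e4 : ∑ i ∈ range u, (i+1) * (i+1+1) = ∑ t ∈ range (u+1), t*(t+1) := by
    rw [Finset.sum_range_succ' (fun t => t*(t+1)) u]; simp
  rw [e4, Nat.mul_add, Tsum]
  ring

lemma Fb_formula (u k : ℕ) : 3 * Fb u (u + k) = 2*u*(u+1)*(u+2) + 3*k*(u+1)^2 := by
  induction k with
  | zero => simpa using Fb_diag u
  | succ k ih =>
    have : u + (k+1) = (u + k) + 1 := by omega
    rw [this, Fb_step u (u+k) (by omega), Nat.mul_add, ih]
    ring

lemma Fb_symm (u v : ℕ) : Fb u v = Fb v u := by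
  rw [Fb, Fb]
  apply Finset.card_bij (fun x _ => (x.2.2.1, x.2.2.2, x.1, x.2.1))
  · intro x hx
    simp only [mem_filter, mem_product, mem_range] at hx ⊢
    omega
  · intro x hx y hy h
    simp only [mem_filter, mem_product, mem_range] at hx hy
    simp only [Prod.ext_iff] at h ⊢
    omega
  · intro y hy
    simp only [mem_filter, mem_product, mem_range] at hy
    exact ⟨(y.2.2.1, y.2.2.2, y.1, y.2.1), by
      simp only [mem_filter, mem_product, mem_range]; omega, by simp⟩

def K (m : ℕ) : Finset (ℕ × ℕ × ℕ × ℕ × ℕ) :=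
  (range (m+1) ×ˢ range (m+1) ×ˢ range (m+1) ×ˢ range (m+1) ×ˢ range (m+1)).filter
    (fun x => x.2.1 + x.2.2.1 + x.2.2.2.1 + x.2.2.2.2 = m + 1 ∧
      x.2.1 ≤ x.1 ∧ x.2.2.1 ≤ x.1 ∧ x.2.2.2.1 + x.1 ≤ m ∧ x.2.2.2.2 + x.1 ≤ m)

lemma K_card (m : ℕ) : (K m).card = ∑ u ∈ range (m+1), Fb u (m - u) := by
  rw [K, Finset.card_eq_sum_card_fiberwise (f := fun x => x.1) (t := range (m+1))
    (by intro x hx; simp only [mem_coe, mem_filter, mem_product, mem_range] at hx ⊢; exact hx.1.1)]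
  refine Finset.sum_congr rfl fun u hu => ?_
  simp only [mem_range] at hu
  rw [Fb]
  apply Finset.card_bij (fun x _ => x.2)
  · intro x hx
    simp only [mem_filter, mem_product, mem_range] at hx ⊢
    omega
  · intro x hx y hy h
    simp only [mem_filter, mem_product, mem_range] at hx hy
    simp only [Prod.ext_iff] at h ⊢
    omega
  · intro y hy
    simp only [mem_filter, mem_product, mem_range] at hy
    obtain ⟨k, rfl⟩ : ∃ k, m = u + k := ⟨m - u, by omega⟩
    rw [Nat.add_sub_cancel_left] at hy
    exact ⟨(u, y.1, y.2.1, y.2.2.1, y.2.2.2), by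
      simp only [mem_filter, mem_product, mem_range, and_true]
      omega, rfl⟩

lemma key_even (n t : ℕ) (h : n ≤ t + 1) :
    6 * ∑ u ∈ range n, Fb u (2*t - u) + 2*n^4
      = 2*n*t + 2*n^2 + 6*n^2*t + 4*n^3*t := by
  induction n with
  | zero => simp
  | succ n ih =>
    have hn : n ≤ t := by omega
    obtain ⟨k, rfl⟩ : ∃ k, t = n + k := ⟨t - n, by omega⟩
    have h1 : 2*(n+k) - n = n + 2*k := by omega
    rw [Finset.sum_range_succ, h1]
    have h2 := Fb_formula n (2*k)
    have h3 := ih (by omega)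
    zify at h2 h3 ⊢
    linear_combination h3 + 2*h2

lemma key_odd (n t : ℕ) (h : n ≤ t + 1) :
    6 * ∑ u ∈ range n, Fb u (2*t + 1 - u) + 2*n^4
      = n + 2*n*t + 5*n^2 + 6*n^2*t + 2*n^3 + 4*n^3*t := by
  induction n with
  | zero => simp
  | succ n ih =>
    have hn : n ≤ t := by omega
    obtain ⟨k, rfl⟩ : ∃ k, t = n + k := ⟨t - n, by omega⟩
    have h1 : 2*(n+k) + 1 - n = n + (2*k+1) := by omega
    rw [Finset.sum_range_succ, h1]
    have h2 := Fb_formula n (2*k+1)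
    have h3 := ih (by omega)
    zify at h2 h3 ⊢
    linear_combination h3 + 2*h2

lemma card_even (t : ℕ) :
    384 * (K (2*t)).card = (4*t) * (4*t + 4)^2 * (4*t + 8) := by
  rw [K_card]
  have hsplit : 2*t + 1 = (t+1) + t := by omega
  rw [hsplit, Finset.sum_range_add]
  have hB : ∑ i ∈ range t, Fb (t + 1 + i) (2*t - (t + 1 + i))
      = ∑ u ∈ range t, Fb u (2*t - u) := by
    have e1 : ∀ i ∈ range t, Fb (t + 1 + i) (2*t - (t + 1 + i))
        = (fun j => Fb (2*t - j) j) (t - 1 - i) := by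
      intro i hi
      simp only [mem_range] at hi
      congr 1 <;> omega
    rw [Finset.sum_congr rfl e1, Finset.sum_range_reflect (fun j => Fb (2*t - j) j) t]
    exact Finset.sum_congr rfl fun j _ => Fb_symm _ _
  rw [hB]
  have h1 := key_even (t+1) t (by omega)
  have h2 := key_even t t (by omega)
  zify at h1 h2 ⊢
  linear_combination 64*h1 + 64*h2

lemma card_odd (t : ℕ) :
    384 * (K (2*t+1)).card
      = (4*t + 2 + 2) * (4*t + 2 + 6) * ((4*t + 2)^2 + 8*(4*t + 2) + 4) := by
  rw [K_card]
  have hsplit : 2*t + 1 + 1 = (t+1) + (t+1) := by omega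
  rw [hsplit, Finset.sum_range_add]
  have hB : ∑ i ∈ range (t+1), Fb (t + 1 + i) (2*t + 1 - (t + 1 + i))
      = ∑ u ∈ range (t+1), Fb u (2*t + 1 - u) := by
    have e1 : ∀ i ∈ range (t+1), Fb (t + 1 + i) (2*t + 1 - (t + 1 + i))
        = (fun u => Fb u (2*t + 1 - u)) (t + 1 - 1 - i) := by
      intro i hi
      simp only [mem_range] at hi
      show Fb (t + 1 + i) (2*t + 1 - (t + 1 + i)) = Fb (t + 1 - 1 - i) (2*t + 1 - (t + 1 - 1 - i))
      rw [Fb_symm]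
      congr 1 <;> omega
    rw [Finset.sum_congr rfl e1, Finset.sum_range_reflect (fun u => Fb u (2*t + 1 - u)) (t+1)]
  rw [hB]
  have h1 := key_odd (t+1) t (by omega)
  zify at h1 ⊢
  linear_combination 128*h1

def eOf (m : ℕ) (x : ℕ × ℕ × ℕ × ℕ × ℕ) : Fin 2 × Fin 2 × Fin 2 → ℕ :=
  fun y =>
    if y.1 = 0 then
      (if y.2.1 = 0 then (if y.2.2 = 0 then x.2.1 else x.2.2.2.1)
       else (if y.2.2 = 0 then x.2.2.2.2 else x.2.2.1))
    else
      (if y.2.1 = 0 then (if y.2.2 = 0 then x.1 - x.2.1 else m - x.1 - x.2.2.2.1)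
       else (if y.2.2 = 0 then m - x.1 - x.2.2.2.2 else x.1 - x.2.2.1))

lemma N_odd (d : ℕ) (hd : Odd d) : N d 2 0 0 = 0 := by
  have hempty : {e : Fin 2 × Fin 2 × Fin 2 → ℕ |
      (∑ i : Fin 2, ∑ j : Fin 2, ∑ k : Fin 2, e (i, j, k)) = d ∧
      (∑ j : Fin 2, ∑ k : Fin 2, e (0, j, k)) = (∑ j : Fin 2, ∑ k : Fin 2, e (1, j, k)) + 2 ∧
      (∑ i : Fin 2, ∑ k : Fin 2, e (i, 0, k)) = (∑ i : Fin 2, ∑ k : Fin 2, e (i, 1, k)) + 0 ∧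
      (∑ i : Fin 2, ∑ j : Fin 2, e (i, j, 0)) = (∑ i : Fin 2, ∑ j : Fin 2, e (i, j, 1)) + 0}
      = (∅ : Set (Fin 2 × Fin 2 × Fin 2 → ℕ)) := by
    rw [Set.eq_empty_iff_forall_notMem]
    rintro e ⟨h1, h2, h3, h4⟩
    simp only [Fin.sum_univ_two] at h1 h2 h3 h4
    obtain ⟨j, rfl⟩ := hd
    omega
  rw [N, hempty, Set.ncard_empty]

lemma N_even (m : ℕ) : N (2*m) 2 0 0 = (K m).card := by
  rw [N]
  have hset : {e : Fin 2 × Fin 2 × Fin 2 → ℕ |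
      (∑ i : Fin 2, ∑ j : Fin 2, ∑ k : Fin 2, e (i, j, k)) = 2*m ∧
      (∑ j : Fin 2, ∑ k : Fin 2, e (0, j, k)) = (∑ j : Fin 2, ∑ k : Fin 2, e (1, j, k)) + 2 ∧
      (∑ i : Fin 2, ∑ k : Fin 2, e (i, 0, k)) = (∑ i : Fin 2, ∑ k : Fin 2, e (i, 1, k)) + 0 ∧
      (∑ i : Fin 2, ∑ j : Fin 2, e (i, j, 0)) = (∑ i : Fin 2, ∑ j : Fin 2, e (i, j, 1)) + 0}
      = eOf m '' ↑(K m) := by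
    ext e
    simp only [Set.mem_setOf_eq, Set.mem_image, Finset.mem_coe]
    constructor
    · rintro ⟨h1, h2, h3, h4⟩
      simp only [Fin.sum_univ_two] at h1 h2 h3 h4
      norm_num at h1 h2 h3 h4
      refine ⟨(e (0,0,0) + e (1,0,0), e (0,0,0), e (0,1,1), e (0,0,1), e (0,1,0)), ?_, ?_⟩
      · simp only [K, mem_filter, mem_product, mem_range]
        norm_num
        omega
      · funext y
        obtain ⟨i, j, k⟩ := y
        fin_cases i <;> fin_cases j <;> fin_cases k <;>
          simp only [eOf] <;> norm_num <;> omega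
    · rintro ⟨x, hx, rfl⟩
      simp only [K, mem_filter, mem_product, mem_range] at hx
      refine ⟨?_, ?_, ?_, ?_⟩ <;>
      · simp only [Fin.sum_univ_two, eOf] <;> norm_num <;> omega
  rw [hset]
  rw [Set.ncard_image_of_injOn, Set.ncard_coe_finset]
  intro x hx y hy hxy
  simp only [Finset.mem_coe, K, mem_filter, mem_product, mem_range] at hx hy
  have h000 := congrFun hxy (0,0,0)
  have h001 := congrFun hxy (0,0,1)
  have h010 := congrFun hxy (0,1,0)
  have h011 := congrFun hxy (0,1,1)
  have h100 := congrFun hxy (1,0,0)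
  simp only [eOf] at h000 h001 h010 h011 h100
  norm_num at h000 h001 h010 h011 h100
  obtain ⟨x1, x2, x3, x4, x5⟩ := x
  obtain ⟨y1, y2, y3, y4, y5⟩ := y
  simp only [Prod.ext_iff]
  simp only at h000 h001 h010 h011 h100 hx hy
  omega

/-- Dimension formulas for the weight space `W(d;2,0,0)`. -/
theorem dim_weight_space_200 (d : ℕ) :
    (d % 4 = 0 → 384 * N d 2 0 0 = d * (d + 4) ^ 2 * (d + 8)) ∧
    (d % 4 = 2 → 384 * N d 2 0 0 = (d + 2) * (d + 6) * (d ^ 2 + 8 * d + 4)) ∧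
    (Odd d → N d 2 0 0 = 0) := by
  refine ⟨?_, ?_, fun hd => N_odd d hd⟩
  · intro h
    obtain ⟨t, rfl⟩ : ∃ t, d = 4*t := ⟨d/4, by omega⟩
    have hN : N (4*t) 2 0 0 = (K (2*t)).card := by
      rw [show 4*t = 2*(2*t) by ring, N_even]
    rw [hN, card_even]
  · intro h
    obtain ⟨t, rfl⟩ : ∃ t, d = 4*t + 2 := ⟨d/4, by omega⟩
    have hN : N (4*t+2) 2 0 0 = (K (2*t+1)).card := by
      rw [show 4*t+2 = 2*(2*t+1) by ring, N_even]
    rw [hN, card_odd]
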